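/- Asymptotics of the main terms η_k (Lemma, eq. (3.9)). Fix an even integer n = 2q with q ≥ 2, an index k with 1 ≤ k ≤ q−1, and Φ ∈ C_0(0,1). Then sup_{x∈[0,1]} | ∫_{Γ_r} e^{iρ ε_k x} ( ∫_0^1 Φ(ξ) e^{iρξ} dξ ) dρ − i e^{ir ε_k x} I_r^+(Φ)(x) | → 0 as r → ∞. -/

import Mathlib

noncomputable section

open MeasureTheory Filter Topology

namespace Equi

/-- `ε_k = exp(2πik/n)`. -/
def eps (n : ℕ) (k : ℤ) : ℂ := Complex.exp (2 * Real.pi * Complex.I * k / n)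

/-- Integral over the circular arc `Γ_r = {r e^{iφ} : 0 ≤ φ ≤ 2π/n}`. -/
def contour (n : ℕ) (r : ℝ) (F : ℂ → ℂ) : ℂ :=
  ∫ φ in (0:ℝ)..(2 * Real.pi / n),
    F ((r : ℂ) * Complex.exp (Complex.I * φ)) * (Complex.I * r * Complex.exp (Complex.I * φ))

/-- The singular integral `I_r^+(f)(x) = ∫_{1/r}^1 (x+ξ)⁻¹ e^{irξ} f(ξ) dξ`. -/
def Ip (r : ℝ) (f : ℝ → ℂ) (x : ℝ) : ℂ :=
  ∫ ξ in (1/r)..1, ((x : ℂ) + (ξ : ℂ))⁻¹ * Complex.exp (Complex.I * r * ξ) * f ξ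

lemma re_I_mul_exp (u v ψ : ℝ) :
    (Complex.I * u * Complex.exp ((ψ:ℂ) * Complex.I) * v).re = -(u * v * Real.sin ψ) := by
  rw [Complex.exp_mul_I]
  simp [Complex.mul_re, Complex.mul_im, Complex.sin_ofReal_re, Complex.cos_ofReal_re,
    Complex.sin_ofReal_im, Complex.cos_ofReal_im]
  ring

lemma norm_exp_sub_exp_le {u v : ℂ} (hu : u.re ≤ 0) (hv : v.re ≤ 0) :
    ‖Complex.exp u - Complex.exp v‖ ≤ ‖u - v‖ := by
  have key : ∀ t ∈ Set.Icc (0:ℝ) 1, HasDerivAt (fun s : ℝ => Complex.exp (v + s • (u - v)))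
      (Complex.exp (v + t • (u - v)) * (u - v)) t := by
    intro t _
    have h1 : HasDerivAt (fun s : ℝ => v + s • (u - v)) (u - v) t := by
      simpa using ((hasDerivAt_id t).smul_const (u - v)).const_add v
    simpa [mul_comm, Function.comp_def] using (Complex.hasDerivAt_exp _).comp t h1
  have hb : ∀ t ∈ Set.Ico (0:ℝ) 1, ‖Complex.exp (v + t • (u - v)) * (u - v)‖ ≤ ‖u - v‖ := by
    intro t ht
    rw [norm_mul]
    have : ‖Complex.exp (v + t • (u - v))‖ ≤ 1 := by
      rw [Complex.norm_exp]
      apply Real.exp_le_one_iff.2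
      have : (v + t • (u - v)).re = (1 - t) * v.re + t * u.re := by
        simp [Complex.add_re, Complex.smul_re, Complex.sub_re]; ring
      rw [this]
      nlinarith [ht.1, ht.2]
    nlinarith [norm_nonneg (u - v)]
  have := norm_image_sub_le_of_norm_deriv_le_segment'
      (f := fun s : ℝ => Complex.exp (v + s • (u - v)))
      (C := ‖u - v‖) (fun t ht => (key t ht).hasDerivWithinAt) hb 1 (by norm_num)
  simpa using this

lemma arc_eval (r T : ℝ) (c : ℂ) (hc : c ≠ 0) :
    ∫ φ in (0:ℝ)..T, Complex.exp (Complex.I * ((r:ℂ) * Complex.exp (Complex.I * (φ:ℂ))) * c)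
        * (Complex.I * (r:ℂ) * Complex.exp (Complex.I * (φ:ℂ)))
      = (Complex.exp (Complex.I * ((r:ℂ) * Complex.exp (Complex.I * (T:ℂ))) * c)
         - Complex.exp (Complex.I * (r:ℂ) * c)) / (Complex.I * c) := by
  have hD : ∀ w : ℂ, HasDerivAt
      (fun w : ℂ => Complex.exp (Complex.I * ((r:ℂ) * Complex.exp (Complex.I * w)) * c)
        / (Complex.I * c))
      (Complex.exp (Complex.I * ((r:ℂ) * Complex.exp (Complex.I * w)) * c)
        * (Complex.I * (r:ℂ) * Complex.exp (Complex.I * w))) w := by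
    intro w
    have h1 : HasDerivAt (fun w : ℂ => Complex.I * w) Complex.I w := by
      simpa using (hasDerivAt_id w).const_mul Complex.I
    have h2 : HasDerivAt (fun w : ℂ => Complex.exp (Complex.I * w))
        (Complex.exp (Complex.I * w) * Complex.I) w := by
      simpa [Function.comp_def] using (Complex.hasDerivAt_exp (Complex.I * w)).comp w h1
    have h3 : HasDerivAt (fun w : ℂ => Complex.I * ((r:ℂ) * Complex.exp (Complex.I * w)) * c)
        (Complex.I * ((r:ℂ) * (Complex.exp (Complex.I * w) * Complex.I)) * c) w :=
      ((h2.const_mul (r:ℂ)).const_mul Complex.I).mul_const c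
    have h4 := (Complex.hasDerivAt_exp _).comp w h3
    have h5 := h4.div_const (Complex.I * c)
    convert h5 using 1
    · rfl
    · rfl
    · rfl
    rw [eq_div_iff (mul_ne_zero Complex.I_ne_zero hc)]
    ring
  have key := intervalIntegral.integral_eq_sub_of_hasDerivAt
    (f := fun t : ℝ => Complex.exp (Complex.I * ((r:ℂ) * Complex.exp (Complex.I * (t:ℂ))) * c)
        / (Complex.I * c))
    (f' := fun t : ℝ => Complex.exp (Complex.I * ((r:ℂ) * Complex.exp (Complex.I * (t:ℂ))) * c)
        * (Complex.I * (r:ℂ) * Complex.exp (Complex.I * (t:ℂ))))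
    (a := 0) (b := T)
    (fun t _ => (hD (t:ℂ)).comp_ofReal)
    (by apply Continuous.intervalIntegrable; fun_prop)
  rw [key]
  simp [sub_div]

lemma swap_int (f : ℝ → ℝ → ℂ) (hf : Continuous (Function.uncurry f))
    {a b : ℝ} (ha : 0 ≤ a) (hb : 0 ≤ b) :
    ∫ x in (0:ℝ)..a, ∫ y in (0:ℝ)..b, f x y = ∫ y in (0:ℝ)..b, ∫ x in (0:ℝ)..a, f x y := by
  rw [intervalIntegral.integral_of_le ha, intervalIntegral.integral_of_le hb]
  simp_rw [intervalIntegral.integral_of_le ha, intervalIntegral.integral_of_le hb]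
  apply MeasureTheory.integral_integral_swap
  rw [MeasureTheory.Measure.prod_restrict]
  apply MeasureTheory.IntegrableOn.mono_set
    (t := Set.Icc (0:ℝ) a ×ˢ Set.Icc (0:ℝ) b)
  · exact hf.continuousOn.integrableOn_compact (isCompact_Icc.prod isCompact_Icc)
  · exact Set.prod_mono Set.Ioc_subset_Icc_self Set.Ioc_subset_Icc_self

lemma c_lower {θ : ℝ} (x ξ : ℝ) (hx : 0 ≤ x) (hξ : 0 ≤ ξ) (h : |Real.cos θ| < 1) :
    Real.sqrt ((1 - |Real.cos θ|)/2) * (x + ξ)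
      ≤ ‖Complex.exp ((θ:ℂ) * Complex.I) * (x:ℂ) + (ξ:ℂ)‖ := by
  set c0 := Real.sqrt ((1 - |Real.cos θ|)/2) with hc0
  have hc0nn : 0 ≤ c0 := Real.sqrt_nonneg _
  have hc0sq : c0 ^ 2 = (1 - |Real.cos θ|)/2 :=
    Real.sq_sqrt (by linarith [abs_nonneg (Real.cos θ)])
  set z := Complex.exp ((θ:ℂ) * Complex.I) * (x:ℂ) + (ξ:ℂ) with hz
  have hre : z.re = Real.cos θ * x + ξ := by
    simp [hz, Complex.exp_mul_I, Complex.add_re, Complex.mul_re,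
      Complex.sin_ofReal_re, Complex.cos_ofReal_re, Complex.sin_ofReal_im, Complex.cos_ofReal_im]
  have him : z.im = Real.sin θ * x := by
    simp [hz, Complex.exp_mul_I, Complex.add_im, Complex.mul_im,
      Complex.sin_ofReal_re, Complex.cos_ofReal_re, Complex.sin_ofReal_im, Complex.cos_ofReal_im]
  have hnsq : ‖z‖ ^ 2 = (Real.cos θ * x + ξ)^2 + (Real.sin θ * x)^2 := by
    rw [Complex.sq_norm, Complex.normSq_apply, hre, him]
    ring
  have hsq : (c0 * (x + ξ))^2 ≤ ‖z‖^2 := by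
    rw [hnsq, mul_pow, hc0sq]
    have hpy := Real.sin_sq_add_cos_sq θ
    have h1 : Real.cos θ * x * ξ ≥ -(|Real.cos θ| * (x * ξ)) := by
      have := neg_abs_le (Real.cos θ)
      nlinarith [mul_nonneg hx hξ, abs_nonneg (Real.cos θ)]
    have hid : (Real.cos θ * x + ξ)^2 + (Real.sin θ * x)^2
        = x^2 + ξ^2 + 2*Real.cos θ*x*ξ := by
      linear_combination (x^2) * hpy
    rw [hid]
    nlinarith [h1, sq_nonneg (x - ξ), mul_nonneg (abs_nonneg (Real.cos θ)) (sq_nonneg (x - ξ)), h]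
  calc c0 * (x + ξ) = Real.sqrt ((c0 * (x+ξ))^2) := by
        rw [Real.sqrt_sq (by positivity)]
    _ ≤ Real.sqrt (‖z‖^2) := Real.sqrt_le_sqrt hsq
    _ = ‖z‖ := Real.sqrt_sq (norm_nonneg z)

lemma integral_exp_neg {c : ℝ} (a b : ℝ) (hc : 0 < c) :
    ∫ ξ in a..b, Real.exp (-(c*ξ)) = (Real.exp (-(c*a)) - Real.exp (-(c*b)))/c := by
  have hD : ∀ t : ℝ, HasDerivAt (fun t : ℝ => -(1/c) * Real.exp (-(c*t)))
      (Real.exp (-(c*t))) t := by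
    intro t
    have h1 : HasDerivAt (fun t : ℝ => -(c*t)) (-c) t := by
      simpa using (hasDerivAt_id t).const_mul (-c)
    have h2 := (h1.exp).const_mul (-(1/c))
    convert h2 using 1
    · rfl
    · rfl
    rw [show -(1/c) * (Real.exp (-(c*t)) * -c) = Real.exp (-(c*t)) * (c * c⁻¹) by ring,
      mul_inv_cancel₀ hc.ne', mul_one]
  rw [intervalIntegral.integral_eq_sub_of_hasDerivAt (fun t _ => hD t)
    (by apply Continuous.intervalIntegrable; fun_prop)]
  field_simp
  ring

lemma integral_x_div {x a b : ℝ} (hx : 0 ≤ x) (h0 : 0 < a) (hab : a ≤ b) :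
    ∫ ξ in a..b, x/(x+ξ)^2 = x/(x+a) - x/(x+b) := by
  have hne : ∀ ξ ∈ Set.uIcc a b, x + ξ ≠ 0 := by
    intro ξ hξ
    rw [Set.uIcc_of_le hab] at hξ
    nlinarith [hξ.1]
  have hD : ∀ t ∈ Set.uIcc a b, HasDerivAt (fun t : ℝ => -(x * (x+t)⁻¹)) (x/(x+t)^2) t := by
    intro t ht
    have h1 : HasDerivAt (fun t : ℝ => x + t) 1 t := by
      simpa using (hasDerivAt_id t).const_add x
    have h2 := ((h1.inv (hne t ht)).const_mul x).neg
    convert h2 using 1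
    · rfl
    · rfl
    ring
    · rfl
    · ring
  rw [intervalIntegral.integral_eq_sub_of_hasDerivAt hD
    (by
      apply ContinuousOn.intervalIntegrable
      apply ContinuousOn.div continuousOn_const
      · fun_prop
      · intro ξ hξ
        exact pow_ne_zero 2 (hne ξ hξ))]
  field_simp
  ring

lemma mul_exp_neg_le {t : ℝ} (ht : 0 ≤ t) : t * Real.exp (-t) ≤ 1 := by
  have h1 : t ≤ Real.exp t := by nlinarith [Real.add_one_le_exp t]
  have h2 : (0:ℝ) < Real.exp t := Real.exp_pos t
  rw [Real.exp_neg]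
  calc t * (Real.exp t)⁻¹ ≤ Real.exp t * (Real.exp t)⁻¹ :=
        mul_le_mul_of_nonneg_right h1 (by positivity)
    _ = 1 := mul_inv_cancel₀ (ne_of_gt h2)


/-- closed-form integrand obtained from the arc integral -/
noncomputable def Hf (r T : ℝ) (ek : ℂ) (x : ℝ) (Ψ : ℝ → ℂ) (ξ : ℝ) : ℂ :=
  Ψ ξ * ((Complex.exp (Complex.I * ((r:ℂ) * Complex.exp (Complex.I * (T:ℂ))) * (ek * (x:ℂ) + (ξ:ℂ)))
    - Complex.exp (Complex.I * (r:ℂ) * (ek * (x:ℂ) + (ξ:ℂ)))) / (Complex.I * (ek * (x:ℂ) + (ξ:ℂ))))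

/-- integrand of the singular integral term -/
noncomputable def Pf (r : ℝ) (ek : ℂ) (x : ℝ) (Ψ : ℝ → ℂ) (ξ : ℝ) : ℂ :=
  Complex.I * Complex.exp (Complex.I * (r:ℂ) * ek * (x:ℂ)) *
    (((x:ℂ) + (ξ:ℂ))⁻¹ * Complex.exp (Complex.I * (r:ℂ) * (ξ:ℂ)) * Ψ ξ)

/-- decaying part -/
noncomputable def G1 (r T : ℝ) (ek : ℂ) (x : ℝ) (Ψ : ℝ → ℂ) (ξ : ℝ) : ℂ :=
  Ψ ξ * (Complex.exp (Complex.I * ((r:ℂ) * Complex.exp (Complex.I * (T:ℂ))) * (ek * (x:ℂ) + (ξ:ℂ)))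
    / (Complex.I * (ek * (x:ℂ) + (ξ:ℂ))))

/-- kernel-difference part -/
noncomputable def G2 (r : ℝ) (ek : ℂ) (x : ℝ) (Ψ : ℝ → ℂ) (ξ : ℝ) : ℂ :=
  Complex.I * Complex.exp (Complex.I * (r:ℂ) * ek * (x:ℂ)) *
    Complex.exp (Complex.I * (r:ℂ) * (ξ:ℂ)) * Ψ ξ *
    ((ek * (x:ℂ) + (ξ:ℂ))⁻¹ - ((x:ℂ) + (ξ:ℂ))⁻¹)

section PointwiseLemmas

variable {r T θ x ξ c0 : ℝ} {ek : ℂ} {Ψ : ℝ → ℂ}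

lemma re_exponent_E1 (hek : ek = Complex.exp ((θ:ℂ) * Complex.I)) (r' x' ξ' : ℝ) :
    (Complex.I * ((r':ℂ) * Complex.exp (Complex.I * (T:ℂ))) * (ek * (x':ℂ) + (ξ':ℂ))).re
    = -(r'*x'*Real.sin (T+θ)) + -(r'*ξ'*Real.sin T) := by
  have hs : Complex.I * ((r':ℂ) * Complex.exp (Complex.I * (T:ℂ))) * (ek * (x':ℂ) + (ξ':ℂ))
      = Complex.I * (r':ℂ) * Complex.exp (((T+θ:ℝ):ℂ) * Complex.I) * (x':ℂ)
        + Complex.I * (r':ℂ) * Complex.exp (((T:ℝ):ℂ) * Complex.I) * (ξ':ℂ) := by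
    rw [hek, Complex.ofReal_add, add_mul, Complex.exp_add, mul_comm Complex.I ((T:ℂ))]
    ring
  rw [hs, Complex.add_re, re_I_mul_exp, re_I_mul_exp]

lemma re_exponent_E0 (hek : ek = Complex.exp ((θ:ℂ) * Complex.I)) (r' x' ξ' : ℝ) :
    (Complex.I * (r':ℂ) * (ek * (x':ℂ) + (ξ':ℂ))).re = -(r'*x'*Real.sin θ) := by
  have hs : Complex.I * (r':ℂ) * (ek * (x':ℂ) + (ξ':ℂ))
      = Complex.I * (r':ℂ) * Complex.exp (((θ:ℝ):ℂ) * Complex.I) * (x':ℂ)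
        + Complex.I * (r':ℂ) * Complex.exp (((0:ℝ):ℂ) * Complex.I) * (ξ':ℂ) := by
    rw [hek]
    simp only [Complex.ofReal_zero, zero_mul, Complex.exp_zero]
    ring
  rw [hs, Complex.add_re, re_I_mul_exp, re_I_mul_exp]
  simp

lemma re_exponent_K (hek : ek = Complex.exp ((θ:ℂ) * Complex.I)) (r' x' : ℝ) :
    (Complex.I * (r':ℂ) * ek * (x':ℂ)).re = -(r'*x'*Real.sin θ) := by
  rw [hek, re_I_mul_exp]

lemma norm_exp_K (hek : ek = Complex.exp ((θ:ℂ) * Complex.I)) (r' x' : ℝ) :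
    ‖Complex.exp (Complex.I * (r':ℂ) * ek * (x':ℂ))‖ = Real.exp (-(r'*x'*Real.sin θ)) := by
  rw [Complex.norm_exp, re_exponent_K hek]

lemma norm_exp_Irξ (r' ξ' : ℝ) : ‖Complex.exp (Complex.I * (r':ℂ) * (ξ':ℂ))‖ = 1 := by
  rw [Complex.norm_exp]
  have h : (Complex.I * (r':ℂ) * (ξ':ℂ)).re = 0 := by
    simp [Complex.mul_re, Complex.mul_im]
  rw [h, Real.exp_zero]

lemma chord_le (hT : 0 < T) : ‖Complex.exp (Complex.I * (T:ℂ)) - 1‖ ≤ T := by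
  have h0 : (Complex.I * (T:ℂ)).re = 0 := by simp
  have h1 := norm_exp_sub_exp_le (u := Complex.I * (T:ℂ)) (v := 0) (le_of_eq h0) (by simp)
  simp only [Complex.exp_zero, sub_zero] at h1
  calc ‖Complex.exp (Complex.I * (T:ℂ)) - 1‖ ≤ ‖Complex.I * (T:ℂ)‖ := h1
    _ = T := by
        rw [norm_mul, Complex.norm_I, one_mul, Complex.norm_real, Real.norm_eq_abs,
          abs_of_pos hT]

lemma norm_Hf_le (hek : ek = Complex.exp ((θ:ℂ) * Complex.I))
    (hr : 0 < r) (hT : 0 < T) (hx : 0 ≤ x) (hξ : 0 < ξ)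
    (hsTθ : 0 ≤ Real.sin (T+θ)) (hsθ : 0 ≤ Real.sin θ) (hsT : 0 ≤ Real.sin T)
    (hcpos : 0 < ‖ek * (x:ℂ) + (ξ:ℂ)‖) :
    ‖Hf r T ek x Ψ ξ‖ ≤ ‖Ψ ξ‖ * (r*T) := by
  have hu : (Complex.I * ((r:ℂ) * Complex.exp (Complex.I * (T:ℂ))) * (ek * (x:ℂ) + (ξ:ℂ))).re ≤ 0 := by
    rw [re_exponent_E1 hek]
    have h1 : 0 ≤ r*x*Real.sin (T+θ) := by positivity
    have h2 : 0 ≤ r*ξ*Real.sin T := by positivity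
    linarith
  have hv : (Complex.I * (r:ℂ) * (ek * (x:ℂ) + (ξ:ℂ))).re ≤ 0 := by
    rw [re_exponent_E0 hek]
    have h1 : 0 ≤ r*x*Real.sin θ := by positivity
    linarith
  have hEb : ‖Complex.exp (Complex.I * ((r:ℂ) * Complex.exp (Complex.I * (T:ℂ))) * (ek * (x:ℂ) + (ξ:ℂ)))
      - Complex.exp (Complex.I * (r:ℂ) * (ek * (x:ℂ) + (ξ:ℂ)))‖
      ≤ ‖ek * (x:ℂ) + (ξ:ℂ)‖ * (r*T) := by
    refine le_trans (norm_exp_sub_exp_le hu hv) ?_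
    have hd : Complex.I * ((r:ℂ) * Complex.exp (Complex.I * (T:ℂ))) * (ek * (x:ℂ) + (ξ:ℂ))
        - Complex.I * (r:ℂ) * (ek * (x:ℂ) + (ξ:ℂ))
        = (Complex.I * (r:ℂ) * (ek * (x:ℂ) + (ξ:ℂ))) * (Complex.exp (Complex.I * (T:ℂ)) - 1) := by
      ring
    rw [hd, norm_mul, norm_mul, norm_mul, Complex.norm_I, one_mul, Complex.norm_real,
      Real.norm_eq_abs, abs_of_pos hr]
    calc r * ‖ek * (x:ℂ) + (ξ:ℂ)‖ * ‖Complex.exp (Complex.I * (T:ℂ)) - 1‖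
        ≤ r * ‖ek * (x:ℂ) + (ξ:ℂ)‖ * T :=
          mul_le_mul_of_nonneg_left (chord_le hT) (by positivity)
      _ = ‖ek * (x:ℂ) + (ξ:ℂ)‖ * (r*T) := by ring
  rw [Hf, norm_mul, norm_div, norm_mul, Complex.norm_I, one_mul]
  apply mul_le_mul_of_nonneg_left _ (norm_nonneg _)
  rw [div_le_iff₀ hcpos]
  calc ‖Complex.exp (Complex.I * ((r:ℂ) * Complex.exp (Complex.I * (T:ℂ))) * (ek * (x:ℂ) + (ξ:ℂ)))
        - Complex.exp (Complex.I * (r:ℂ) * (ek * (x:ℂ) + (ξ:ℂ)))‖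
      ≤ ‖ek * (x:ℂ) + (ξ:ℂ)‖ * (r*T) := hEb
    _ = r * T * ‖ek * (x:ℂ) + (ξ:ℂ)‖ := by ring

lemma norm_G1_le (hek : ek = Complex.exp ((θ:ℂ) * Complex.I))
    (hr : 0 < r) (hx : 0 ≤ x) (hξ : 0 < ξ)
    (hsTθ : 0 ≤ Real.sin (T+θ)) (hc0 : 0 < c0)
    (hclow : c0 * (x + ξ) ≤ ‖ek * (x:ℂ) + (ξ:ℂ)‖) :
    ‖G1 r T ek x Ψ ξ‖ ≤ ‖Ψ ξ‖ * (Real.exp (-(r*Real.sin T*ξ)) / (c0*ξ)) := by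
  rw [G1, norm_mul, norm_div, norm_mul, Complex.norm_I, one_mul]
  apply mul_le_mul_of_nonneg_left _ (norm_nonneg _)
  have hA : ‖Complex.exp (Complex.I * ((r:ℂ) * Complex.exp (Complex.I * (T:ℂ)))
      * (ek * (x:ℂ) + (ξ:ℂ)))‖ ≤ Real.exp (-(r*Real.sin T*ξ)) := by
    rw [Complex.norm_exp, re_exponent_E1 hek]
    apply Real.exp_le_exp.2
    have h1 : 0 ≤ r*x*Real.sin (T+θ) := by positivity
    nlinarith
  have hB : (0:ℝ) < c0*ξ := by positivity
  have hC : c0*ξ ≤ ‖ek * (x:ℂ) + (ξ:ℂ)‖ := by nlinarith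
  exact div_le_div₀ (Real.exp_nonneg _) hA hB hC

lemma norm_G2_le (hek : ek = Complex.exp ((θ:ℂ) * Complex.I))
    (hr : 0 < r) (hx : 0 ≤ x) (hξ : 0 < ξ) (hc0 : 0 < c0)
    (hclow : c0 * (x + ξ) ≤ ‖ek * (x:ℂ) + (ξ:ℂ)‖) :
    ‖G2 r ek x Ψ ξ‖ ≤ ‖Ψ ξ‖ * (Real.exp (-(r*x*Real.sin θ)) * (2*x/(c0*(x+ξ)^2))) := by
  have hxξ0 : (0:ℝ) < x + ξ := by nlinarith
  have hcpos : (0:ℝ) < ‖ek * (x:ℂ) + (ξ:ℂ)‖ := lt_of_lt_of_le (by positivity) hclow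
  have hc : ek * (x:ℂ) + (ξ:ℂ) ≠ 0 := norm_pos_iff.1 hcpos
  have hxξ : (x:ℂ) + (ξ:ℂ) ≠ 0 := by
    rw [show (x:ℂ) + (ξ:ℂ) = ((x+ξ:ℝ):ℂ) by push_cast; ring]
    exact_mod_cast Complex.ofReal_ne_zero.2 (ne_of_gt hxξ0)
  have hnek : ‖ek‖ = 1 := by
    rw [hek, Complex.norm_exp]
    simp [Complex.mul_re]
  have hD : ‖(ek * (x:ℂ) + (ξ:ℂ))⁻¹ - ((x:ℂ) + (ξ:ℂ))⁻¹‖ ≤ 2*x/(c0*(x+ξ)^2) := by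
    rw [inv_sub_inv hc hxξ, norm_div, norm_mul]
    have hnum : ‖((x:ℂ) + (ξ:ℂ)) - (ek * (x:ℂ) + (ξ:ℂ))‖ ≤ 2*x := by
      have he : ((x:ℂ) + (ξ:ℂ)) - (ek * (x:ℂ) + (ξ:ℂ)) = (1 - ek) * (x:ℂ) := by ring
      rw [he, norm_mul]
      have h1 : ‖(1:ℂ) - ek‖ ≤ 2 := by
        calc ‖(1:ℂ) - ek‖ ≤ ‖(1:ℂ)‖ + ‖ek‖ := norm_sub_le _ _
          _ = 2 := by rw [norm_one, hnek]; norm_num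
      calc ‖(1:ℂ) - ek‖ * ‖(x:ℂ)‖ ≤ 2 * ‖(x:ℂ)‖ :=
            mul_le_mul_of_nonneg_right h1 (norm_nonneg _)
        _ = 2*x := by rw [Complex.norm_real, Real.norm_eq_abs, abs_of_nonneg hx]
    have hden : c0*(x+ξ)^2 ≤ ‖ek * (x:ℂ) + (ξ:ℂ)‖ * ‖(x:ℂ) + (ξ:ℂ)‖ := by
      have h2 : ‖(x:ℂ) + (ξ:ℂ)‖ = x + ξ := by
        rw [show (x:ℂ) + (ξ:ℂ) = ((x+ξ:ℝ):ℂ) by push_cast; ring, Complex.norm_real,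
          Real.norm_eq_abs, abs_of_pos hxξ0]
      rw [h2]
      calc c0*(x+ξ)^2 = (c0*(x+ξ))*(x+ξ) := by ring
        _ ≤ ‖ek * (x:ℂ) + (ξ:ℂ)‖ * (x+ξ) :=
            mul_le_mul_of_nonneg_right hclow (le_of_lt hxξ0)
    exact div_le_div₀ (by positivity) hnum (by positivity) hden
  have hsplitn : ‖G2 r ek x Ψ ξ‖ = Real.exp (-(r*x*Real.sin θ)) * ‖Ψ ξ‖
      * ‖(ek * (x:ℂ) + (ξ:ℂ))⁻¹ - ((x:ℂ) + (ξ:ℂ))⁻¹‖ := by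
    rw [G2, norm_mul, norm_mul, norm_mul, norm_mul, Complex.norm_I, one_mul,
      norm_exp_K hek, norm_exp_Irξ, mul_one]
  rw [hsplitn]
  calc Real.exp (-(r*x*Real.sin θ)) * ‖Ψ ξ‖
        * ‖(ek * (x:ℂ) + (ξ:ℂ))⁻¹ - ((x:ℂ) + (ξ:ℂ))⁻¹‖
      ≤ Real.exp (-(r*x*Real.sin θ)) * ‖Ψ ξ‖ * (2*x/(c0*(x+ξ)^2)) := by
        apply mul_le_mul_of_nonneg_left hD
        exact mul_nonneg (Real.exp_nonneg _) (norm_nonneg _)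
    _ = ‖Ψ ξ‖ * (Real.exp (-(r*x*Real.sin θ)) * (2*x/(c0*(x+ξ)^2))) := by ring

lemma Hf_sub_Pf (hx : 0 ≤ x) (hξ : 0 < ξ)
    (hc : ek * (x:ℂ) + (ξ:ℂ) ≠ 0) :
    Hf r T ek x Ψ ξ - Pf r ek x Ψ ξ = G1 r T ek x Ψ ξ + G2 r ek x Ψ ξ := by
  have hxξ0 : (0:ℝ) < x + ξ := by nlinarith
  have hxξ : (x:ℂ) + (ξ:ℂ) ≠ 0 := by
    rw [show (x:ℂ) + (ξ:ℂ) = ((x+ξ:ℝ):ℂ) by push_cast; ring]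
    exact_mod_cast Complex.ofReal_ne_zero.2 (ne_of_gt hxξ0)
  have hsplitE0 : Complex.exp (Complex.I * (r:ℂ) * (ek * (x:ℂ) + (ξ:ℂ)))
      = Complex.exp (Complex.I * (r:ℂ) * ek * (x:ℂ)) * Complex.exp (Complex.I * (r:ℂ) * (ξ:ℂ)) := by
    rw [← Complex.exp_add]
    congr 1
    ring
  rw [Hf, Pf, G1, G2, hsplitE0]
  simp only [div_eq_mul_inv, mul_inv, Complex.inv_I]
  ring

lemma contOn_Hf (hΨ : Continuous Ψ) {s : Set ℝ}
    (hcne : ∀ ξ ∈ s, ek * (x:ℂ) + (ξ:ℂ) ≠ 0) :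
    ContinuousOn (Hf r T ek x Ψ) s := by
  unfold Hf
  apply ContinuousOn.mul hΨ.continuousOn
  apply ContinuousOn.div
  · apply Continuous.continuousOn; fun_prop
  · apply Continuous.continuousOn; fun_prop
  · intro ξ hξ
    exact mul_ne_zero Complex.I_ne_zero (hcne ξ hξ)

lemma contOn_Pf (hΨ : Continuous Ψ) {s : Set ℝ}
    (hxne : ∀ ξ ∈ s, (x:ℂ) + (ξ:ℂ) ≠ 0) :
    ContinuousOn (Pf r ek x Ψ) s := by
  unfold Pf
  apply ContinuousOn.mul (Continuous.continuousOn (by fun_prop))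
  apply ContinuousOn.mul _ hΨ.continuousOn
  apply ContinuousOn.mul _ (Continuous.continuousOn (by fun_prop))
  exact ContinuousOn.inv₀ (Continuous.continuousOn (by fun_prop)) hxne

lemma contOn_G1 (hΨ : Continuous Ψ) {s : Set ℝ}
    (hcne : ∀ ξ ∈ s, ek * (x:ℂ) + (ξ:ℂ) ≠ 0) :
    ContinuousOn (G1 r T ek x Ψ) s := by
  unfold G1
  apply ContinuousOn.mul hΨ.continuousOn
  apply ContinuousOn.div
  · apply Continuous.continuousOn; fun_prop
  · apply Continuous.continuousOn; fun_prop
  · intro ξ hξ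
    exact mul_ne_zero Complex.I_ne_zero (hcne ξ hξ)

lemma contOn_G2 (hΨ : Continuous Ψ) {s : Set ℝ}
    (hcne : ∀ ξ ∈ s, ek * (x:ℂ) + (ξ:ℂ) ≠ 0)
    (hxne : ∀ ξ ∈ s, (x:ℂ) + (ξ:ℂ) ≠ 0) :
    ContinuousOn (G2 r ek x Ψ) s := by
  unfold G2
  apply ContinuousOn.mul
  · apply Continuous.continuousOn; fun_prop
  apply ContinuousOn.sub
  · exact ContinuousOn.inv₀ (Continuous.continuousOn (by fun_prop)) hcne
  · exact ContinuousOn.inv₀ (Continuous.continuousOn (by fun_prop)) hxne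

end PointwiseLemmas

set_option maxHeartbeats 8000000 in
theorem main_term_asymptotics
    (n q : ℕ) (hn : n = 2 * q) (hq : 2 ≤ q)
    (k : ℕ) (hk₁ : 1 ≤ k) (hk₂ : k ≤ q - 1)
    (Φ : ℝ → ℂ) (hΦcont : ContinuousOn Φ (Set.Icc 0 1))
    (hΦ0 : Φ 0 = 0) (hΦ1 : Φ 1 = 0) :
    Tendsto (fun r : ℝ => ⨆ x : Set.Icc (0:ℝ) 1,
        ‖(contour n r fun ρ =>
            Complex.exp (Complex.I * ρ * eps n k * (x.val : ℂ)) *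
              ∫ ξ in (0:ℝ)..1, Φ ξ * Complex.exp (Complex.I * ρ * ξ)) -
          Complex.I * Complex.exp (Complex.I * r * eps n k * (x.val : ℂ)) * Ip r Φ x.val‖)
      atTop (nhds 0) := by
  -- ## basic setup
  have hq2 : (2:ℝ) ≤ (q:ℝ) := by exact_mod_cast hq
  have hπ := Real.pi_pos
  have hn2q : (n:ℝ) = 2*(q:ℝ) := by rw [hn]; push_cast; ring
  have hnpos : (0:ℝ) < n := by rw [hn2q]; linarith
  have hkq : (k:ℝ) + 1 ≤ (q:ℝ) := by
    have : k + 1 ≤ q := by omega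
    exact_mod_cast this
  have hk1 : (1:ℝ) ≤ (k:ℝ) := by exact_mod_cast hk₁
  set T : ℝ := 2 * Real.pi / n with hTdef
  have hT : 0 < T := by positivity
  set θ : ℝ := 2 * Real.pi * k / n with hθdef
  have hθ0 : 0 < θ := by
    apply div_pos (by nlinarith) hnpos
  have hθT : θ + T ≤ Real.pi := by
    rw [hθdef, hTdef, ← add_div, div_le_iff₀ hnpos, hn2q]
    nlinarith
  have hθπ : θ < Real.pi := by linarith
  have hTπ : T < Real.pi := by linarith
  have hs1 : 0 < Real.sin T := Real.sin_pos_of_pos_of_lt_pi hT hTπ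
  have hsk : 0 < Real.sin θ := Real.sin_pos_of_pos_of_lt_pi hθ0 hθπ
  have hsum_nonneg : 0 ≤ Real.sin (T + θ) :=
    Real.sin_nonneg_of_nonneg_of_le_pi (by linarith) (by linarith)
  have hcosθ : |Real.cos θ| < 1 := by
    have h2 : Real.cos θ ^ 2 < 1 := by nlinarith [Real.sin_sq_add_cos_sq θ]
    rw [abs_lt]
    constructor <;> nlinarith
  set c0 : ℝ := Real.sqrt ((1 - |Real.cos θ|)/2) with hc0def
  have hc0 : 0 < c0 := Real.sqrt_pos.2 (by linarith)
  have hepsk : eps n k = Complex.exp ((θ:ℂ) * Complex.I) := by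
    rw [eps, hθdef]
    congr 1
    push_cast
    ring
  -- ## the modified function Ψ
  set Ψ : ℝ → ℂ := fun t => Φ ((Set.projIcc (0:ℝ) 1 zero_le_one t : ℝ)) with hΨdef
  have hΨcont : Continuous Ψ := by
    apply hΦcont.comp_continuous (continuous_subtype_val.comp continuous_projIcc)
    exact fun t => (Set.projIcc 0 1 zero_le_one t).2
  have hΨeq : ∀ t ∈ Set.Icc (0:ℝ) 1, Φ t = Ψ t := by
    intro t ht
    rw [hΨdef]
    simp [Set.projIcc_of_mem zero_le_one ht]
  have hΨ00 : Ψ 0 = 0 := by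
    rw [hΨdef]
    simp [Set.projIcc_left, hΦ0]
  obtain ⟨M₀, hM₀⟩ := IsCompact.exists_bound_of_continuousOn isCompact_Icc hΦcont
  set M : ℝ := max M₀ 0 with hMdef
  have hM0 : 0 ≤ M := le_max_right _ _
  have hMb : ∀ t, ‖Ψ t‖ ≤ M := by
    intro t
    exact le_trans (hM₀ _ (Set.projIcc 0 1 zero_le_one t).2) (le_max_left _ _)
  -- ## fix ε
  rw [Metric.tendsto_nhds]
  intro ε hε
  set K : ℝ := T + 1/(c0*Real.sin T) + 2/c0 + 1 with hKdef
  have hK0 : 0 < K := by positivity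
  set ε' : ℝ := ε/(4*K) with hε'def
  have hε'0 : 0 < ε' := by positivity
  obtain ⟨δ₀, hδ₀, hδsmall⟩ := Metric.continuousAt_iff.1 hΨcont.continuousAt ε' hε'0
  set δ : ℝ := min (δ₀/2) 1 with hδdef
  have hδ0 : 0 < δ := lt_min (by linarith) one_pos
  have hδ1 : δ ≤ 1 := min_le_right _ _
  have hΨsmall : ∀ t : ℝ, 0 < t → t ≤ δ → ‖Ψ t‖ ≤ ε' := by
    intro t ht0 htδ
    have : dist t 0 < δ₀ := by
      rw [Real.dist_eq, sub_zero, abs_of_pos ht0]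
      calc t ≤ δ := htδ
        _ ≤ δ₀/2 := min_le_left _ _
        _ < δ₀ := by linarith
    have := hδsmall this
    rw [hΨ00, dist_zero_right] at this
    exact le_of_lt this
  -- ## eventual bounds in r
  have hev3 : ∀ᶠ r : ℝ in atTop, M * Real.exp (-(r*(Real.sin T * δ)))/(c0*δ) < ε/4 := by
    have h1 : Tendsto (fun r : ℝ => M * Real.exp (-(r*(Real.sin T * δ)))/(c0*δ)) atTop (𝓝 0) := by
      have h2 : Tendsto (fun r : ℝ => r * (Real.sin T * δ)) atTop atTop :=
        tendsto_id.atTop_mul_const (by positivity)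
      have h3 := (Real.tendsto_exp_neg_atTop_nhds_zero.comp h2).const_mul M
      have h4 := h3.div_const (c0*δ)
      simpa using h4
    exact h1.eventually_lt_const (by positivity)
  have hev4 : ∀ᶠ r : ℝ in atTop, 2*M/(c0*δ^2*Real.sin θ*r) < ε/4 := by
    have h1 : Tendsto (fun r : ℝ => 2*M/(c0*δ^2*Real.sin θ*r)) atTop (𝓝 0) := by
      have h2 : Tendsto (fun r : ℝ => 2*M/(c0*δ^2*Real.sin θ) * r⁻¹) atTop (𝓝 0) := by
        have := tendsto_inv_atTop_zero.const_mul (2*M/(c0*δ^2*Real.sin θ))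
        rwa [mul_zero] at this
      apply h2.congr
      intro r
      field_simp
    exact h1.eventually_lt_const (by positivity)
  filter_upwards [eventually_ge_atTop (1:ℝ), eventually_ge_atTop (1/δ), hev3, hev4]
    with r hr1 hrδ h3 h4
  have hr0 : (0:ℝ) < r := lt_of_lt_of_le one_pos hr1
  have hrinv0 : 0 < 1/r := by positivity
  have hrinv1 : 1/r ≤ 1 := by
    rw [div_le_one hr0]; exact hr1
  have hrinvδ : 1/r ≤ δ := by
    rw [div_le_iff₀ hr0]
    calc (1:ℝ) = δ * (1/δ) := by field_simp
      _ ≤ δ * r := by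
          apply mul_le_mul_of_nonneg_left hrδ (le_of_lt hδ0)
  -- ## the key uniform estimate
  have key : ∀ x : ℝ, 0 ≤ x → x ≤ 1 →
      ‖(contour n r fun ρ =>
            Complex.exp (Complex.I * ρ * eps n k * (x : ℂ)) *
              ∫ ξ in (0:ℝ)..1, Φ ξ * Complex.exp (Complex.I * ρ * ξ)) -
          Complex.I * Complex.exp (Complex.I * r * eps n k * (x : ℂ)) * Ip r Φ x‖
        ≤ ε' * T + (ε'/(c0*Real.sin T) + M * Real.exp (-(r*(Real.sin T * δ)))/(c0*δ))
          + (2*ε'/c0 + 2*M/(c0*δ^2*Real.sin θ*r)) := by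
    intro x hx0 hx1
    -- lower bound for |c(ξ)|
    have hclow : ∀ ξ : ℝ, 0 ≤ ξ → c0 * (x + ξ) ≤ ‖eps n k * (x:ℂ) + (ξ:ℂ)‖ := by
      intro ξ hξ
      rw [hepsk]
      exact c_lower x ξ hx0 hξ hcosθ
    have hcpos : ∀ ξ : ℝ, 0 < ξ → 0 < ‖eps n k * (x:ℂ) + (ξ:ℂ)‖ := by
      intro ξ hξ
      have h1 : 0 < c0 * (x + ξ) := by positivity
      exact lt_of_lt_of_le h1 (hclow ξ (le_of_lt hξ))
    have hcne : ∀ ξ : ℝ, 0 < ξ → eps n k * (x:ℂ) + (ξ:ℂ) ≠ 0 := by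
      intro ξ hξ
      exact norm_pos_iff.1 (hcpos ξ hξ)
    -- step 1: contour as a double integral
    have hgcont : Continuous (Function.uncurry (fun φ ξ : ℝ => Ψ ξ *
        (Complex.exp (Complex.I * ((r:ℂ) * Complex.exp (Complex.I * (φ:ℂ))) * (eps n k * (x:ℂ) + (ξ:ℂ)))
          * (Complex.I * (r:ℂ) * Complex.exp (Complex.I * (φ:ℂ)))))) := by
      apply Continuous.mul (hΨcont.comp continuous_snd)
      fun_prop
    have hstep1 : (contour n r fun ρ =>
            Complex.exp (Complex.I * ρ * eps n k * (x : ℂ)) *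
              ∫ ξ in (0:ℝ)..1, Φ ξ * Complex.exp (Complex.I * ρ * ξ))
        = ∫ ξ in (0:ℝ)..1, ∫ φ in (0:ℝ)..T, Ψ ξ *
            (Complex.exp (Complex.I * ((r:ℂ) * Complex.exp (Complex.I * (φ:ℂ))) * (eps n k * (x:ℂ) + (ξ:ℂ)))
              * (Complex.I * (r:ℂ) * Complex.exp (Complex.I * (φ:ℂ)))) := by
      unfold contour
      rw [← hTdef]
      rw [← swap_int _ hgcont (le_of_lt hT) zero_le_one]
      apply intervalIntegral.integral_congr
      intro φ _
      beta_reduce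
      have hinner : (∫ ξ in (0:ℝ)..1, Φ ξ * Complex.exp (Complex.I * ((r:ℂ) * Complex.exp (Complex.I * (φ:ℂ))) * (ξ:ℂ)))
          = ∫ ξ in (0:ℝ)..1, Ψ ξ * Complex.exp (Complex.I * ((r:ℂ) * Complex.exp (Complex.I * (φ:ℂ))) * (ξ:ℂ)) := by
        apply intervalIntegral.integral_congr
        intro ξ hξ
        rw [Set.uIcc_of_le zero_le_one] at hξ
        beta_reduce
        rw [hΨeq ξ hξ]
      rw [hinner, ← intervalIntegral.integral_const_mul, ← intervalIntegral.integral_mul_const]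
      apply intervalIntegral.integral_congr
      intro ξ _
      beta_reduce
      have hexp : Complex.I * ((r:ℂ) * Complex.exp (Complex.I * (φ:ℂ))) * (eps n k * (x:ℂ) + (ξ:ℂ))
          = Complex.I * ((r:ℂ) * Complex.exp (Complex.I * (φ:ℂ))) * eps n k * (x:ℂ)
            + Complex.I * ((r:ℂ) * Complex.exp (Complex.I * (φ:ℂ))) * (ξ:ℂ) := by ring
      rw [hexp, Complex.exp_add]
      ring
    have hstep3 : (∫ ξ in (0:ℝ)..1, ∫ φ in (0:ℝ)..T, Ψ ξ *
            (Complex.exp (Complex.I * ((r:ℂ) * Complex.exp (Complex.I * (φ:ℂ))) * (eps n k * (x:ℂ) + (ξ:ℂ)))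
              * (Complex.I * (r:ℂ) * Complex.exp (Complex.I * (φ:ℂ)))))
        = ∫ ξ in Set.Ioc (0:ℝ) 1, Hf r T (eps n k) x Ψ ξ := by
      rw [intervalIntegral.integral_of_le zero_le_one]
      apply setIntegral_congr_fun measurableSet_Ioc
      intro ξ hξ
      beta_reduce
      rw [intervalIntegral.integral_const_mul, arc_eval r T _ (hcne ξ hξ.1), Hf]
    have hstep4 : Complex.I * Complex.exp (Complex.I * (r:ℂ) * eps n k * (x:ℂ)) * Ip r Φ x
        = ∫ ξ in Set.Ioc (1/r) 1, Pf r (eps n k) x Ψ ξ := by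
      unfold Ip
      rw [intervalIntegral.integral_of_le hrinv1, ← integral_const_mul]
      apply setIntegral_congr_fun measurableSet_Ioc
      intro ξ hξ
      have hmem : ξ ∈ Set.Icc (0:ℝ) 1 := ⟨le_of_lt (lt_of_lt_of_le hrinv0 (le_of_lt hξ.1)), hξ.2⟩
      beta_reduce
      rw [Pf, hΨeq ξ hmem]
    -- integrability
    have hIntH : IntegrableOn (Hf r T (eps n k) x Ψ) (Set.Ioc (0:ℝ) 1) := by
      apply Integrable.mono' (integrable_const (M*(r*T)))
      · exact (contOn_Hf hΨcont (fun ξ hξ => hcne ξ hξ.1)).aestronglyMeasurable measurableSet_Ioc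
      · rw [ae_restrict_iff' measurableSet_Ioc]
        filter_upwards with ξ hξ
        calc ‖Hf r T (eps n k) x Ψ ξ‖ ≤ ‖Ψ ξ‖ * (r*T) :=
              norm_Hf_le hepsk hr0 hT hx0 hξ.1 hsum_nonneg (le_of_lt hsk) (le_of_lt hs1)
                (hcpos ξ hξ.1)
          _ ≤ M*(r*T) := mul_le_mul_of_nonneg_right (hMb ξ) (by positivity)
    have hxne : ∀ ξ ∈ Set.Icc (1/r) 1, (x:ℂ) + (ξ:ℂ) ≠ 0 := by
      intro ξ hξ
      have h1 : (0:ℝ) < x + ξ := by nlinarith [hξ.1]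
      rw [show (x:ℂ) + (ξ:ℂ) = ((x+ξ:ℝ):ℂ) by push_cast; ring]
      exact_mod_cast Complex.ofReal_ne_zero.2 (ne_of_gt h1)
    have hcneIcc : ∀ ξ ∈ Set.Icc (1/r) 1, eps n k * (x:ℂ) + (ξ:ℂ) ≠ 0 := by
      intro ξ hξ
      exact hcne ξ (lt_of_lt_of_le hrinv0 hξ.1)
    have hIntP : IntegrableOn (Pf r (eps n k) x Ψ) (Set.Ioc (1/r) 1) :=
      ((contOn_Pf hΨcont hxne).integrableOn_compact isCompact_Icc).mono_set
        Set.Ioc_subset_Icc_self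
    have hIntG1 : IntegrableOn (G1 r T (eps n k) x Ψ) (Set.Ioc (1/r) 1) :=
      ((contOn_G1 hΨcont hcneIcc).integrableOn_compact isCompact_Icc).mono_set
        Set.Ioc_subset_Icc_self
    have hIntG2 : IntegrableOn (G2 r (eps n k) x Ψ) (Set.Ioc (1/r) 1) :=
      ((contOn_G2 hΨcont hcneIcc hxne).integrableOn_compact isCompact_Icc).mono_set
        Set.Ioc_subset_Icc_self
    have hsub1 : Set.Ioc (1/r) δ ⊆ Set.Ioc (1/r) 1 := Set.Ioc_subset_Ioc_right hδ1
    have hsub2 : Set.Ioc δ 1 ⊆ Set.Ioc (1/r) 1 := Set.Ioc_subset_Ioc_left hrinvδ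
    -- splitting
    have hsplitIoc : (∫ ξ in Set.Ioc (0:ℝ) 1, Hf r T (eps n k) x Ψ ξ)
        = (∫ ξ in Set.Ioc (0:ℝ) (1/r), Hf r T (eps n k) x Ψ ξ)
          + ∫ ξ in Set.Ioc (1/r) 1, Hf r T (eps n k) x Ψ ξ := by
      rw [← MeasureTheory.setIntegral_union (Set.Ioc_disjoint_Ioc_of_le le_rfl) measurableSet_Ioc
        (hIntH.mono_set (Set.Ioc_subset_Ioc_right hrinv1))
        (hIntH.mono_set (Set.Ioc_subset_Ioc_left (le_of_lt hrinv0))),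
        Set.Ioc_union_Ioc_eq_Ioc (le_of_lt hrinv0) hrinv1]
    have hsplitG1 : (∫ ξ in Set.Ioc (1/r) 1, G1 r T (eps n k) x Ψ ξ)
        = (∫ ξ in Set.Ioc (1/r) δ, G1 r T (eps n k) x Ψ ξ)
          + ∫ ξ in Set.Ioc δ 1, G1 r T (eps n k) x Ψ ξ := by
      rw [← MeasureTheory.setIntegral_union (Set.Ioc_disjoint_Ioc_of_le le_rfl) measurableSet_Ioc
        (hIntG1.mono_set hsub1) (hIntG1.mono_set hsub2),
        Set.Ioc_union_Ioc_eq_Ioc hrinvδ hδ1]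
    have hsplitG2 : (∫ ξ in Set.Ioc (1/r) 1, G2 r (eps n k) x Ψ ξ)
        = (∫ ξ in Set.Ioc (1/r) δ, G2 r (eps n k) x Ψ ξ)
          + ∫ ξ in Set.Ioc δ 1, G2 r (eps n k) x Ψ ξ := by
      rw [← MeasureTheory.setIntegral_union (Set.Ioc_disjoint_Ioc_of_le le_rfl) measurableSet_Ioc
        (hIntG2.mono_set hsub1) (hIntG2.mono_set hsub2),
        Set.Ioc_union_Ioc_eq_Ioc hrinvδ hδ1]
    have hmain : (contour n r fun ρ =>
            Complex.exp (Complex.I * ρ * eps n k * (x : ℂ)) *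
              ∫ ξ in (0:ℝ)..1, Φ ξ * Complex.exp (Complex.I * ρ * ξ)) -
          Complex.I * Complex.exp (Complex.I * (r:ℂ) * eps n k * (x:ℂ)) * Ip r Φ x
        = (∫ ξ in Set.Ioc (0:ℝ) (1/r), Hf r T (eps n k) x Ψ ξ)
          + (((∫ ξ in Set.Ioc (1/r) δ, G1 r T (eps n k) x Ψ ξ)
              + ∫ ξ in Set.Ioc δ 1, G1 r T (eps n k) x Ψ ξ)
            + ((∫ ξ in Set.Ioc (1/r) δ, G2 r (eps n k) x Ψ ξ)
              + ∫ ξ in Set.Ioc δ 1, G2 r (eps n k) x Ψ ξ)) := by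
      rw [hstep1, hstep3, hstep4, hsplitIoc]
      rw [add_sub_assoc, ← MeasureTheory.integral_sub (hIntH.mono_set
        (Set.Ioc_subset_Ioc_left (le_of_lt hrinv0))) hIntP]
      congr 1
      rw [MeasureTheory.setIntegral_congr_fun measurableSet_Ioc
        (fun ξ hξ => Hf_sub_Pf hx0 (lt_of_lt_of_le hrinv0 (le_of_lt hξ.1))
          (hcne ξ (lt_of_lt_of_le hrinv0 (le_of_lt hξ.1))))]
      rw [MeasureTheory.integral_add (hIntG1) (hIntG2), hsplitG1, hsplitG2]
    rw [hmain]
    -- the four norm estimates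
    have hb0 : ‖∫ ξ in Set.Ioc (0:ℝ) (1/r), Hf r T (eps n k) x Ψ ξ‖ ≤ ε' * T := by
      have hbd : ∀ ξ ∈ Set.Ioc (0:ℝ) (1/r), ‖Hf r T (eps n k) x Ψ ξ‖ ≤ ε' * (r*T) := by
        intro ξ hξ
        calc ‖Hf r T (eps n k) x Ψ ξ‖ ≤ ‖Ψ ξ‖ * (r*T) :=
              norm_Hf_le hepsk hr0 hT hx0 hξ.1 hsum_nonneg (le_of_lt hsk) (le_of_lt hs1)
                (hcpos ξ hξ.1)
          _ ≤ ε' * (r*T) := by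
              apply mul_le_mul_of_nonneg_right
                (hΨsmall ξ hξ.1 (le_trans hξ.2 hrinvδ)) (by positivity)
      have h1 := MeasureTheory.norm_setIntegral_le_of_norm_le_const
        (μ := volume) (s := Set.Ioc (0:ℝ) (1/r)) (C := ε' * (r*T))
        (by rw [Real.volume_Ioc]; exact ENNReal.ofReal_lt_top) hbd
      rw [Real.volume_real_Ioc_of_le (le_of_lt hrinv0), sub_zero] at h1
      calc ‖∫ ξ in Set.Ioc (0:ℝ) (1/r), Hf r T (eps n k) x Ψ ξ‖
          ≤ ε' * (r*T) * (1/r) := h1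
        _ = ε' * T := by field_simp
    have hb1a : ‖∫ ξ in Set.Ioc (1/r) δ, G1 r T (eps n k) x Ψ ξ‖ ≤ ε'/(c0*Real.sin T) := by
      have hmono : ∀ ξ ∈ Set.Ioc (1/r) δ, ‖G1 r T (eps n k) x Ψ ξ‖
          ≤ (ε'*r/c0) * Real.exp (-(r*Real.sin T*ξ)) := by
        intro ξ hξ
        have h0 : (0:ℝ) < ξ := lt_of_lt_of_le hrinv0 (le_of_lt hξ.1)
        have h1rξ : 1 ≤ r * ξ := by
          have h5 := (div_lt_iff₀ hr0).1 hξ.1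
          nlinarith
        have hfrac : (c0*ξ)⁻¹ ≤ r/c0 := by
          rw [inv_eq_one_div, div_le_div_iff₀ (by positivity) hc0]
          nlinarith
        calc ‖G1 r T (eps n k) x Ψ ξ‖ ≤ ‖Ψ ξ‖ * (Real.exp (-(r*Real.sin T*ξ)) / (c0*ξ)) :=
              norm_G1_le hepsk hr0 hx0 h0 hsum_nonneg hc0 (hclow ξ (le_of_lt h0))
          _ ≤ ε' * (Real.exp (-(r*Real.sin T*ξ)) / (c0*ξ)) := by
              apply mul_le_mul_of_nonneg_right (hΨsmall ξ h0 hξ.2) (by positivity)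
          _ = (ε' * Real.exp (-(r*Real.sin T*ξ))) * (c0*ξ)⁻¹ := by ring
          _ ≤ (ε' * Real.exp (-(r*Real.sin T*ξ))) * (r/c0) := by
              apply mul_le_mul_of_nonneg_left hfrac (by positivity)
          _ = (ε'*r/c0) * Real.exp (-(r*Real.sin T*ξ)) := by ring
      have hbint : IntegrableOn (fun ξ : ℝ => (ε'*r/c0) * Real.exp (-(r*Real.sin T*ξ)))
          (Set.Ioc (1/r) δ) := by
        apply Continuous.integrableOn_Ioc
        fun_prop
      calc ‖∫ ξ in Set.Ioc (1/r) δ, G1 r T (eps n k) x Ψ ξ‖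
          ≤ ∫ ξ in Set.Ioc (1/r) δ, ‖G1 r T (eps n k) x Ψ ξ‖ := norm_integral_le_integral_norm _
        _ ≤ ∫ ξ in Set.Ioc (1/r) δ, (ε'*r/c0) * Real.exp (-(r*Real.sin T*ξ)) :=
            setIntegral_mono_on ((hIntG1.mono_set hsub1).norm) hbint measurableSet_Ioc hmono
        _ = (ε'*r/c0) * ∫ ξ in Set.Ioc (1/r) δ, Real.exp (-(r*Real.sin T*ξ)) :=
            integral_const_mul _ _
        _ = (ε'*r/c0) * ((Real.exp (-(r*Real.sin T*(1/r))) - Real.exp (-(r*Real.sin T*δ)))/(r*Real.sin T)) := by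
            rw [← intervalIntegral.integral_of_le hrinvδ, integral_exp_neg _ _ (by positivity)]
        _ ≤ (ε'*r/c0) * (1/(r*Real.sin T)) := by
            apply mul_le_mul_of_nonneg_left _ (by positivity)
            have e1 : Real.exp (-(r*Real.sin T*(1/r))) ≤ 1 := by
              apply Real.exp_le_one_iff.2
              have : (0:ℝ) ≤ r*Real.sin T*(1/r) := by positivity
              linarith
            have e2 : (0:ℝ) < Real.exp (-(r*Real.sin T*δ)) := Real.exp_pos _
            exact div_le_div₀ zero_le_one (by linarith) (by positivity) le_rfl
        _ = ε'/(c0*Real.sin T) := by field_simp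
    have hb1b : ‖∫ ξ in Set.Ioc δ 1, G1 r T (eps n k) x Ψ ξ‖
        ≤ M * Real.exp (-(r*(Real.sin T * δ)))/(c0*δ) := by
      have hbd : ∀ ξ ∈ Set.Ioc δ 1, ‖G1 r T (eps n k) x Ψ ξ‖
          ≤ M * Real.exp (-(r*(Real.sin T * δ)))/(c0*δ) := by
        intro ξ hξ
        have h0 : (0:ℝ) < ξ := lt_trans hδ0 hξ.1
        calc ‖G1 r T (eps n k) x Ψ ξ‖ ≤ ‖Ψ ξ‖ * (Real.exp (-(r*Real.sin T*ξ)) / (c0*ξ)) :=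
              norm_G1_le hepsk hr0 hx0 h0 hsum_nonneg hc0 (hclow ξ (le_of_lt h0))
          _ ≤ M * (Real.exp (-(r*(Real.sin T * δ))) / (c0*δ)) := by
              apply mul_le_mul (hMb ξ) _ (by positivity) hM0
              apply div_le_div₀ (by positivity) _ (by positivity) _
              · apply Real.exp_le_exp.2
                have h5 : r*Real.sin T*δ ≤ r*Real.sin T*ξ :=
                  mul_le_mul_of_nonneg_left (le_of_lt hξ.1)
                    (mul_nonneg (le_of_lt hr0) (le_of_lt hs1))
                have h6 : r*(Real.sin T*δ) = r*Real.sin T*δ := by ring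
                linarith
              · exact mul_le_mul_of_nonneg_left (le_of_lt hξ.1) (le_of_lt hc0)
          _ = M * Real.exp (-(r*(Real.sin T * δ)))/(c0*δ) := by ring
      have h1 := MeasureTheory.norm_setIntegral_le_of_norm_le_const (μ := volume)
        (s := Set.Ioc δ 1)
        (by rw [Real.volume_Ioc]; exact ENNReal.ofReal_lt_top) hbd
      rw [Real.volume_real_Ioc_of_le hδ1] at h1
      calc ‖∫ ξ in Set.Ioc δ 1, G1 r T (eps n k) x Ψ ξ‖
          ≤ M * Real.exp (-(r*(Real.sin T * δ)))/(c0*δ) * (1 - δ) := h1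
        _ ≤ M * Real.exp (-(r*(Real.sin T * δ)))/(c0*δ) * 1 := by
            apply mul_le_mul_of_nonneg_left (by linarith) (by positivity)
        _ = M * Real.exp (-(r*(Real.sin T * δ)))/(c0*δ) := mul_one _
    have hb2a : ‖∫ ξ in Set.Ioc (1/r) δ, G2 r (eps n k) x Ψ ξ‖ ≤ 2*ε'/c0 := by
      have hmono : ∀ ξ ∈ Set.Ioc (1/r) δ, ‖G2 r (eps n k) x Ψ ξ‖
          ≤ (2*ε'/c0) * (x/(x+ξ)^2) := by
        intro ξ hξ
        have h0 : (0:ℝ) < ξ := lt_of_lt_of_le hrinv0 (le_of_lt hξ.1)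
        have hxξ0 : (0:ℝ) < x + ξ := by nlinarith
        calc ‖G2 r (eps n k) x Ψ ξ‖
            ≤ ‖Ψ ξ‖ * (Real.exp (-(r*x*Real.sin θ)) * (2*x/(c0*(x+ξ)^2))) :=
              norm_G2_le hepsk hr0 hx0 h0 hc0 (hclow ξ (le_of_lt h0))
          _ ≤ ε' * (1 * (2*x/(c0*(x+ξ)^2))) := by
              apply mul_le_mul (hΨsmall ξ h0 hξ.2) _ _ (le_of_lt hε'0)
              · apply mul_le_mul_of_nonneg_right _ (by positivity)
                apply Real.exp_le_one_iff.2
                have : 0 ≤ r*x*Real.sin θ := by positivity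
                linarith
              · positivity
          _ = (2*ε'/c0) * (x/(x+ξ)^2) := by
              have hc0' : c0 ≠ 0 := ne_of_gt hc0
              have hxξ' : x + ξ ≠ 0 := ne_of_gt hxξ0
              field_simp
      have hbint : IntegrableOn (fun ξ : ℝ => (2*ε'/c0) * (x/(x+ξ)^2)) (Set.Ioc (1/r) δ) := by
        apply MeasureTheory.IntegrableOn.mono_set _ (Set.Ioc_subset_Icc_self)
        apply ContinuousOn.integrableOn_compact (isCompact_Icc (a := 1/r) (b := δ))
        apply ContinuousOn.mul continuousOn_const
        apply ContinuousOn.div continuousOn_const (by fun_prop)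
        intro ξ hξ
        have h5 : (0:ℝ) < x + ξ := by linarith [hξ.1, hrinv0, hx0]
        exact pow_ne_zero 2 (ne_of_gt h5)
      calc ‖∫ ξ in Set.Ioc (1/r) δ, G2 r (eps n k) x Ψ ξ‖
          ≤ ∫ ξ in Set.Ioc (1/r) δ, ‖G2 r (eps n k) x Ψ ξ‖ := norm_integral_le_integral_norm _
        _ ≤ ∫ ξ in Set.Ioc (1/r) δ, (2*ε'/c0) * (x/(x+ξ)^2) :=
            setIntegral_mono_on ((hIntG2.mono_set hsub1).norm) hbint measurableSet_Ioc hmono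
        _ = (2*ε'/c0) * ∫ ξ in Set.Ioc (1/r) δ, x/(x+ξ)^2 := integral_const_mul _ _
        _ = (2*ε'/c0) * (x/(x+1/r) - x/(x+δ)) := by
            rw [← intervalIntegral.integral_of_le hrinvδ, integral_x_div hx0 hrinv0 hrinvδ]
        _ ≤ (2*ε'/c0) * 1 := by
            apply mul_le_mul_of_nonneg_left _ (by positivity)
            have h1 : x/(x+1/r) ≤ 1 := by
              apply div_le_one_of_le₀ (by linarith) (by positivity)
            have h2 : 0 ≤ x/(x+δ) := by positivity
            linarith
        _ = 2*ε'/c0 := mul_one _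
    have hb2b : ‖∫ ξ in Set.Ioc δ 1, G2 r (eps n k) x Ψ ξ‖
        ≤ 2*M/(c0*δ^2*Real.sin θ*r) := by
      have hxe : Real.exp (-(r*x*Real.sin θ)) * x ≤ 1/(r*Real.sin θ) := by
        have ht : (0:ℝ) ≤ r*Real.sin θ*x := by positivity
        have h1 := mul_exp_neg_le ht
        rw [le_div_iff₀ (by positivity)]
        calc Real.exp (-(r*x*Real.sin θ)) * x * (r*Real.sin θ)
            = (r*Real.sin θ*x) * Real.exp (-(r*Real.sin θ*x)) := by
              rw [show -(r*x*Real.sin θ) = -(r*Real.sin θ*x) by ring]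
              ring
          _ ≤ 1 := h1
      have hbd : ∀ ξ ∈ Set.Ioc δ 1, ‖G2 r (eps n k) x Ψ ξ‖
          ≤ (2*M/(c0*δ^2)) * (Real.exp (-(r*x*Real.sin θ)) * x) := by
        intro ξ hξ
        have h0 : (0:ℝ) < ξ := lt_trans hδ0 hξ.1
        calc ‖G2 r (eps n k) x Ψ ξ‖
            ≤ ‖Ψ ξ‖ * (Real.exp (-(r*x*Real.sin θ)) * (2*x/(c0*(x+ξ)^2))) :=
              norm_G2_le hepsk hr0 hx0 h0 hc0 (hclow ξ (le_of_lt h0))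
          _ ≤ M * (Real.exp (-(r*x*Real.sin θ)) * (2*x/(c0*δ^2))) := by
              apply mul_le_mul (hMb ξ) _ _ hM0
              · apply mul_le_mul_of_nonneg_left _ (Real.exp_nonneg _)
                apply div_le_div₀ (by positivity) le_rfl (by positivity)
                have h5 : δ ≤ x + ξ := by linarith [hξ.1, hx0]
                have h6 : δ^2 ≤ (x+ξ)^2 := by nlinarith
                exact mul_le_mul_of_nonneg_left h6 (le_of_lt hc0)
              · positivity
          _ = (2*M/(c0*δ^2)) * (Real.exp (-(r*x*Real.sin θ)) * x) := by ring
      have h1 := MeasureTheory.norm_setIntegral_le_of_norm_le_const (μ := volume)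
        (s := Set.Ioc δ 1)
        (by rw [Real.volume_Ioc]; exact ENNReal.ofReal_lt_top) hbd
      rw [Real.volume_real_Ioc_of_le hδ1] at h1
      calc ‖∫ ξ in Set.Ioc δ 1, G2 r (eps n k) x Ψ ξ‖
          ≤ (2*M/(c0*δ^2)) * (Real.exp (-(r*x*Real.sin θ)) * x) * (1-δ) := h1
        _ ≤ (2*M/(c0*δ^2)) * (1/(r*Real.sin θ)) * 1 := by
            apply mul_le_mul (mul_le_mul_of_nonneg_left hxe (by positivity)) (by linarith)
              (by linarith) (by positivity)
        _ = 2*M/(c0*δ^2*Real.sin θ*r) := by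
            rw [mul_one, div_mul_div_comm, mul_one]
            congr 1
            ring
    have t1 := norm_add_le (∫ ξ in Set.Ioc (0:ℝ) (1/r), Hf r T (eps n k) x Ψ ξ)
      (((∫ ξ in Set.Ioc (1/r) δ, G1 r T (eps n k) x Ψ ξ)
          + ∫ ξ in Set.Ioc δ 1, G1 r T (eps n k) x Ψ ξ)
        + ((∫ ξ in Set.Ioc (1/r) δ, G2 r (eps n k) x Ψ ξ)
          + ∫ ξ in Set.Ioc δ 1, G2 r (eps n k) x Ψ ξ))
    have t2 := norm_add_le ((∫ ξ in Set.Ioc (1/r) δ, G1 r T (eps n k) x Ψ ξ)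
          + ∫ ξ in Set.Ioc δ 1, G1 r T (eps n k) x Ψ ξ)
      ((∫ ξ in Set.Ioc (1/r) δ, G2 r (eps n k) x Ψ ξ)
          + ∫ ξ in Set.Ioc δ 1, G2 r (eps n k) x Ψ ξ)
    have t3 := norm_add_le (∫ ξ in Set.Ioc (1/r) δ, G1 r T (eps n k) x Ψ ξ)
      (∫ ξ in Set.Ioc δ 1, G1 r T (eps n k) x Ψ ξ)
    have t4 := norm_add_le (∫ ξ in Set.Ioc (1/r) δ, G2 r (eps n k) x Ψ ξ)
      (∫ ξ in Set.Ioc δ 1, G2 r (eps n k) x Ψ ξ)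
    linarith [hb0, hb1a, hb1b, hb2a, hb2b, t1, t2, t3, t4]
  -- ## conclusion
  have hnonneg : (0:ℝ) ≤ ⨆ x : Set.Icc (0:ℝ) 1,
      ‖(contour n r fun ρ =>
            Complex.exp (Complex.I * ρ * eps n k * (x.val : ℂ)) *
              ∫ ξ in (0:ℝ)..1, Φ ξ * Complex.exp (Complex.I * ρ * ξ)) -
          Complex.I * Complex.exp (Complex.I * r * eps n k * (x.val : ℂ)) * Ip r Φ x.val‖ :=
    Real.iSup_nonneg (fun x => norm_nonneg _)
  rw [Real.dist_eq, sub_zero, abs_of_nonneg hnonneg]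
  have hbound : ε' * T + (ε'/(c0*Real.sin T) + M * Real.exp (-(r*(Real.sin T * δ)))/(c0*δ))
          + (2*ε'/c0 + 2*M/(c0*δ^2*Real.sin θ*r)) < ε := by
    have hKne : K ≠ 0 := ne_of_gt hK0
    have hKe : ε' * K = ε/4 := by
      rw [hε'def]
      field_simp
    have h9 : ε' * T + ε'/(c0*Real.sin T) + 2*ε'/c0
        = ε' * (T + 1/(c0*Real.sin T) + 2/c0) := by ring
    have hle : ε' * (T + 1/(c0*Real.sin T) + 2/c0) ≤ ε' * K := by
      apply mul_le_mul_of_nonneg_left _ (le_of_lt hε'0)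
      rw [hKdef]
      linarith
    linarith
  exact lt_of_le_of_lt (ciSup_le (fun xp => key xp.val xp.2.1 xp.2.2)) hbound

end Equi
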